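/- Chain rule for ∂ under right paravector translation (Theorem 3.2 of the paper): let Γ be a constant paravector and T'_Γ : ℂ⁴ → ℂ⁴ the linear map X ↦ XΓ given by right paravector multiplication, and let C : ℂ⁴ → ℂ × ℂ³ be a holomorphic paravector field. Then for all X, ∂(C ∘ T'_Γ)(X) = Γ·(∂C)(T'_Γ X). -/

import Mathlib

noncomputable section
open scoped BigOperators

abbrev Vec3 : Type := Fin 3 → ℂ
abbrev Pv : Type := ℂ × Vec3

def dot3 (a b : Vec3) : ℂ := ∑ i, a i * b i

def cross3 (a b : Vec3) : Vec3 :=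
  ![a 1 * b 2 - a 2 * b 1, a 2 * b 0 - a 0 * b 2, a 0 * b 1 - a 1 * b 0]

def pmul (A B : Pv) : Pv :=
  (A.1 * B.1 + dot3 A.2 B.2,
   fun j => A.1 * B.2 j + B.1 * A.2 j + Complex.I * cross3 A.2 B.2 j)

def detP (A : Pv) : ℂ := A.1 ^ 2 - dot3 A.2 A.2

def revP (A : Pv) : Pv := (A.1, -A.2)

abbrev CPt : Type := Fin 4 → ℂ

def toPv (X : CPt) : Pv := (X 0, fun i => X i.succ)

def ofPv (A : Pv) : CPt := Fin.cons A.1 A.2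

def cpd (i : Fin 4) (f : CPt → ℂ) (x : CPt) : ℂ := fderiv ℂ f x (Pi.single i 1)

def cdiv3 (Φ : CPt → Vec3) (x : CPt) : ℂ := ∑ i : Fin 3, cpd i.succ (fun y => Φ y i) x

def cgrad3 (f : CPt → ℂ) (x : CPt) : Vec3 := fun i => cpd i.succ f x

def ccurl3 (Φ : CPt → Vec3) (x : CPt) : Vec3 :=
  ![cpd 2 (fun y => Φ y 2) x - cpd 3 (fun y => Φ y 1) x,
    cpd 3 (fun y => Φ y 0) x - cpd 1 (fun y => Φ y 2) x,
    cpd 1 (fun y => Φ y 1) x - cpd 2 (fun y => Φ y 0) x]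

def Dc (A : CPt → Pv) (x : CPt) : Pv :=
  (cpd 0 (fun y => (A y).1) x + cdiv3 (fun y => (A y).2) x,
   fun j => cpd 0 (fun y => (A y).2 j) x + cgrad3 (fun y => (A y).1) x j
     + Complex.I * ccurl3 (fun y => (A y).2) x j)

def Dcm (A : CPt → Pv) (x : CPt) : Pv :=
  (cpd 0 (fun y => (A y).1) x - cdiv3 (fun y => (A y).2) x,
   fun j => cpd 0 (fun y => (A y).2 j) x - cgrad3 (fun y => (A y).1) x j
     - Complex.I * ccurl3 (fun y => (A y).2) x j)

@[simp] lemma fcons1 (a : ℂ) (f : Vec3) : Fin.cons (α := fun _ : Fin 4 => ℂ) a f 1 = f 0 := rfl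
@[simp] lemma fcons2 (a : ℂ) (f : Vec3) : Fin.cons (α := fun _ : Fin 4 => ℂ) a f 2 = f 1 := rfl
@[simp] lemma fcons3 (a : ℂ) (f : Vec3) : Fin.cons (α := fun _ : Fin 4 => ℂ) a f 3 = f 2 := rfl
@[simp] lemma fsucc0 : (Fin.succ 0 : Fin 4) = 1 := rfl
@[simp] lemma fsucc1 : (Fin.succ 1 : Fin 4) = 2 := rfl
@[simp] lemma fsucc2 : (Fin.succ 2 : Fin 4) = 3 := rfl

def Tlin (Γ : Pv) : CPt →ₗ[ℂ] CPt where
  toFun y := ofPv (pmul (toPv y) Γ)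
  map_add' u v := by
    funext i
    refine Fin.cases ?_ (fun j => ?_) i
    · simp [ofPv, pmul, toPv, dot3, cross3, Fin.sum_univ_three]; ring
    · fin_cases j <;>
        simp [ofPv, pmul, toPv, dot3, cross3, Fin.sum_univ_three] <;> ring
  map_smul' c u := by
    funext i
    refine Fin.cases ?_ (fun j => ?_) i
    · simp [ofPv, pmul, toPv, dot3, cross3, Fin.sum_univ_three]; ring
    · fin_cases j <;>
        simp [ofPv, pmul, toPv, dot3, cross3, Fin.sum_univ_three] <;> ring

lemma cpd_comp (Γ : Pv) (f : CPt → ℂ) (hf : Differentiable ℂ f) (x : CPt) (i : Fin 4) :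
    cpd i (fun y => f (ofPv (pmul (toPv y) Γ))) x
      = ∑ j, ofPv (pmul (toPv (Pi.single i 1)) Γ) j * cpd j f (ofPv (pmul (toPv x) Γ)) := by
  classical
  set L := LinearMap.toContinuousLinearMap (Tlin Γ) with hLdef
  have hL : (fun y : CPt => ofPv (pmul (toPv y) Γ)) = ⇑L := rfl
  have hv : ∀ (D : CPt →L[ℂ] ℂ) (v : CPt), D v = ∑ j, v j * D (Pi.single j 1) := by
    intro D v
    conv_lhs => rw [← Finset.univ_sum_single v, map_sum]
    refine Finset.sum_congr rfl fun j _ => ?_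
    have : (Pi.single j (v j) : CPt) = v j • (Pi.single j 1 : CPt) := by
      rw [← Pi.single_smul, smul_eq_mul, mul_one]
    rw [this, map_smul, smul_eq_mul]
  have hcomp : fderiv ℂ (fun y => f (L y)) x = (fderiv ℂ f (L x)).comp (L : CPt →L[ℂ] CPt) := by
    exact fderiv_comp x (hf _) L.differentiableAt |>.trans (by rw [L.fderiv])
  unfold cpd
  have heq : (fun y => f (ofPv (pmul (toPv y) Γ))) = fun y => f (L y) := rfl
  rw [heq, hcomp]
  simp only [ContinuousLinearMap.comp_apply]
  rw [hv (fderiv ℂ f (L x)) (L (Pi.single i 1))]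
  rfl

set_option maxHeartbeats 2000000 in
theorem Dc_right_translation (Γ : Pv) (C : CPt → Pv) (hC : Differentiable ℂ C) :
    ∀ x : CPt,
      Dc (fun y => C (ofPv (pmul (toPv y) Γ))) x =
        pmul Γ (Dc C (ofPv (pmul (toPv x) Γ))) := by
  intro x
  have hC1 : Differentiable ℂ (fun y => (C y).1) := hC.fst
  have hC2 : ∀ j : Fin 3, Differentiable ℂ (fun y => (C y).2 j) :=
    fun j => (ContinuousLinearMap.proj j : Vec3 →L[ℂ] ℂ).differentiable.comp hC.snd
  have h1 := cpd_comp Γ (fun y => (C y).1) hC1 x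
  have h2 := fun j : Fin 3 => cpd_comp Γ (fun y => (C y).2 j) (hC2 j) x
  set z := ofPv (pmul (toPv x) Γ) with hz
  refine Prod.ext ?_ (funext fun j => ?_)
  · simp only [Dc, cdiv3, cgrad3, ccurl3, Fin.sum_univ_three, fsucc0, fsucc1, fsucc2]
    simp only [h1, h2]
    simp [pmul, Dc, cdiv3, cgrad3, ccurl3, dot3, cross3, ofPv, toPv, Fin.sum_univ_three,
      Fin.sum_univ_four, Pi.single_apply, fsucc0, fsucc1, fsucc2]
    ring
  · fin_cases j <;>
    · simp only [Dc, cdiv3, cgrad3, ccurl3, Fin.sum_univ_three, fsucc0, fsucc1, fsucc2]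
      simp only [h1, h2]
      simp [pmul, Dc, cdiv3, cgrad3, ccurl3, dot3, cross3, ofPv, toPv, Fin.sum_univ_three,
        Fin.sum_univ_four, Pi.single_apply, fsucc0, fsucc1, fsucc2]
      ring_nf
      simp only [Complex.I_sq]
      ring
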